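/- Let Ω ⊂ ℂⁿ be a bounded domain with C² boundary, let p ∈ ∂Ω, and let f : Ω → Ω be holomorphic, extending to a C¹ map on a neighborhood of p in the closure of Ω with f(p) = p. Then the real differential df_p maps the real tangent space T_p(∂Ω) into itself, and the complex Jacobian J_f(p) maps the complex tangent space T_p^{(1,0)}(∂Ω) into itself. -/

import Mathlib

open Metric Set Filter

noncomputable section

/-- The Levi form of a real-valued `C²` function `ρ` on `ℂⁿ` at the point `q`
in the direction `v`:  `L_ρ(q,v) = Σ_{j,k} (∂²ρ/∂z_j∂z̄_k)(q) v_j v̄_k`, expressed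
invariantly as `(Hess ρ(q)(v,v) + Hess ρ(q)(iv,iv))/4`. -/
def LeviForm {n : ℕ} (ρ : EuclideanSpace ℂ (Fin n) → ℝ)
    (q v : EuclideanSpace ℂ (Fin n)) : ℝ :=
  (iteratedFDeriv ℝ 2 ρ q ![v, v]
    + iteratedFDeriv ℝ 2 ρ q ![Complex.I • v, Complex.I • v]) / 4

set_option maxHeartbeats 1000000

/-- **Invariance of the tangent spaces.**  Let `Ω ⊂ ℂⁿ` be a bounded domain with
`C²` boundary, `p ∈ ∂Ω`, and `f : Ω → Ω` holomorphic, extending to a `C¹` map on a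
neighborhood of `p` in the closure of `Ω` with `f(p) = p`.  Then the real
differential `df_p` maps `T_p(∂Ω) = {v : Re⟨v, ν_p⟩ = 0}` into itself and the
complex Jacobian `J_f(p)` maps `T_p^{(1,0)}(∂Ω) = {v : ⟨v, ν_p⟩ = 0}` into
itself. -/
theorem boundary_tangent_space_invariance
    {n : ℕ} (hn : 1 ≤ n)
    (Ω : Set (EuclideanSpace ℂ (Fin n))) (hΩopen : IsOpen Ω)
    (hΩconn : IsConnected Ω) (hΩbd : Bornology.IsBounded Ω)
    -- `C²` defining function for `Ω`
    (ρ : EuclideanSpace ℂ (Fin n) → ℝ) (hρC2 : ContDiff ℝ 2 ρ)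
    (hρΩ : Ω = {z | ρ z < 0}) (hρfr : frontier Ω = {z | ρ z = 0})
    (hρgrad : ∀ q ∈ frontier Ω, fderiv ℝ ρ q ≠ 0)
    -- the boundary point `p` and the unit outward normal `ν = ∇ρ(p)/|∇ρ(p)|`
    (p : EuclideanSpace ℂ (Fin n)) (hp : p ∈ frontier Ω)
    (ν : EuclideanSpace ℂ (Fin n)) (hν1 : ‖ν‖ = 1)
    (hν : ∃ c : ℝ, 0 < c ∧ ∀ v, fderiv ℝ ρ p v = c * (inner ℂ v ν : ℂ).re)
    -- the holomorphic self-map `f`, C¹ up to the boundary near `p`, fixing `p`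
    (f : EuclideanSpace ℂ (Fin n) → EuclideanSpace ℂ (Fin n))
    (hf : DifferentiableOn ℂ f Ω) (hfself : MapsTo f Ω Ω)
    (U : Set (EuclideanSpace ℂ (Fin n))) (hUopen : IsOpen U) (hpU : p ∈ U)
    (hfC1 : ContDiffOn ℝ 1 f (closure Ω ∩ U)) (hfp : f p = p)
    -- `A` is the (ℂ-linear) Jacobian `J_f(p)` of `f` at `p`; its scalar
    -- restriction is the real differential `df_p`
    (A : EuclideanSpace ℂ (Fin n) →L[ℂ] EuclideanSpace ℂ (Fin n))
    (hA : HasFDerivWithinAt f (A.restrictScalars ℝ) (closure Ω) p) :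
    (∀ v : EuclideanSpace ℂ (Fin n),
      (inner ℂ ν v : ℂ).re = 0 → (inner ℂ ν (A.restrictScalars ℝ v) : ℂ).re = 0) ∧
    (∀ v : EuclideanSpace ℂ (Fin n), (inner ℂ ν v : ℂ) = 0 → (inner ℂ ν (A v) : ℂ) = 0) := by
  obtain ⟨c, hc, hcf⟩ := hν
  have hρp : ρ p = 0 := by rw [hρfr] at hp; exact hp
  have hρdiff : Differentiable ℝ ρ := hρC2.differentiable (by norm_num)
  set L : EuclideanSpace ℂ (Fin n) →L[ℝ] ℝ :=
    (fderiv ℝ ρ p).comp (A.restrictScalars ℝ) with hLdef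
  have hg : HasFDerivWithinAt (ρ ∘ f) L (closure Ω) p := by
    have h1 : HasFDerivAt ρ (fderiv ℝ ρ p) (f p) := by
      rw [hfp]; exact (hρdiff p).hasFDerivAt
    exact h1.comp_hasFDerivWithinAt p hA
  -- Lipschitz bound for fderiv ρ near p
  obtain ⟨K, s, hs, hK⟩ :=
    ((hρC2.fderiv_right (by norm_num)).contDiffAt (x := p)).exists_lipschitzOnWith
  obtain ⟨r, hr, hrs⟩ := Metric.mem_nhds_iff.1 hs
  have hps : p ∈ s := hrs (mem_ball_self hr)
  -- quadratic Taylor bound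
  have quad : ∀ w : EuclideanSpace ℂ (Fin n), ‖w‖ < r →
      |ρ (p + w) - fderiv ℝ ρ p w| ≤ (K : ℝ) * ‖w‖ ^ 2 := by
    intro w hwr
    set h : EuclideanSpace ℂ (Fin n) → ℝ := fun y => ρ y - fderiv ℝ ρ p y with hh
    have hdiff : ∀ y ∈ closedBall p ‖w‖, DifferentiableAt ℝ h y := fun y _ =>
      (hρdiff y).sub (fderiv ℝ ρ p).differentiableAt
    have hfd : ∀ y, fderiv ℝ h y = fderiv ℝ ρ y - fderiv ℝ ρ p := by
      intro y
      rw [hh]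
      rw [fderiv_fun_sub (hρdiff y) (fderiv ℝ ρ p).differentiableAt,
        (fderiv ℝ ρ p).fderiv]
    have hsub : closedBall p ‖w‖ ⊆ s := (closedBall_subset_ball hwr).trans hrs
    have hbound : ∀ y ∈ closedBall p ‖w‖, ‖fderiv ℝ h y‖ ≤ (K : ℝ) * ‖w‖ := by
      intro y hy
      rw [hfd y]
      have h1 : dist (fderiv ℝ ρ y) (fderiv ℝ ρ p) ≤ (K : ℝ) * dist y p :=
        hK.dist_le_mul y (hsub hy) p hps
      rw [dist_eq_norm] at h1
      refine h1.trans ?_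
      have : dist y p ≤ ‖w‖ := mem_closedBall.1 hy
      exact mul_le_mul_of_nonneg_left this K.coe_nonneg
    have hest : ‖h (p + w) - h p‖ ≤ (K : ℝ) * ‖w‖ * ‖p + w - p‖ :=
      Convex.norm_image_sub_le_of_norm_fderiv_le hdiff hbound
        (convex_closedBall p ‖w‖) (mem_closedBall_self (norm_nonneg w))
        (by rw [mem_closedBall, dist_eq_norm, show p + w - p = w by abel])
    have heq : h (p + w) - h p = ρ (p + w) - fderiv ℝ ρ p w := by
      simp [hh, hρp, map_add]; ring
    rw [heq] at hest
    rw [show p + w - p = w by abel] at hest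
    rw [Real.norm_eq_abs] at hest
    calc |ρ (p + w) - fderiv ℝ ρ p w| ≤ (K : ℝ) * ‖w‖ * ‖w‖ := hest
      _ = (K : ℝ) * ‖w‖ ^ 2 := by ring
  have hν2 : fderiv ℝ ρ p ν = c := by
    rw [hcf, inner_self_eq_norm_sq_to_K]
    simp [hν1]
  -- the key inequality
  have key : ∀ v : EuclideanSpace ℂ (Fin n), (inner ℂ ν v : ℂ).re = 0 → L v ≤ 0 := by
    intro v hv
    have hdv : fderiv ℝ ρ p v = 0 := by
      rw [hcf v, ← inner_conj_symm]
      simp only [Complex.conj_re, hv, mul_zero]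
    by_contra hne
    push_neg at hne
    set D : ℝ := ((K : ℝ) * (‖v‖ + 1) ^ 2 + 1) / c with hD
    have hD0 : 0 < D := div_pos (by positivity) hc
    set ε : ℝ := L v / (2 * (‖v‖ + 2)) with hε
    have hε0 : 0 < ε := div_pos hne (by positivity)
    have hlo := hg.isLittleO.def hε0
    obtain ⟨δ, hδ0, hδ⟩ := mem_nhdsWithin_iff.1 (Filter.eventually_iff.mp hlo)
    set B : ℝ := |L ν| + 1 with hB
    have hB0 : 0 < B := by positivity
    set t : ℝ := min (min (r / (2 * (‖v‖ + 1))) (δ / (2 * (‖v‖ + 1))))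
      (min (1 / D) (ε / (D * B))) with ht
    have ht0 : 0 < t := by positivity
    have ht1 : t ≤ r / (2 * (‖v‖ + 1)) := le_trans (min_le_left _ _) (min_le_left _ _)
    have ht2 : t ≤ δ / (2 * (‖v‖ + 1)) := le_trans (min_le_left _ _) (min_le_right _ _)
    have ht3 : t ≤ 1 / D := le_trans (min_le_right _ _) (min_le_left _ _)
    have ht4 : t ≤ ε / (D * B) := le_trans (min_le_right _ _) (min_le_right _ _)
    have hDt : D * t ≤ 1 := by
      rw [le_div_iff₀ hD0] at ht3; linarith
    have hDtB : D * t * B ≤ ε := by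
      rw [le_div_iff₀ (by positivity)] at ht4; linarith
    set w : EuclideanSpace ℂ (Fin n) := t • v - (D * t ^ 2) • ν with hw
    have hwn : ‖w‖ ≤ t * (‖v‖ + 1) := by
      have h1 : ‖w‖ ≤ ‖t • v‖ + ‖(D * t ^ 2) • ν‖ := norm_sub_le _ _
      rw [norm_smul, norm_smul, hν1, Real.norm_eq_abs, Real.norm_eq_abs,
        abs_of_pos ht0, abs_of_pos (by positivity)] at h1
      nlinarith
    have hwr : ‖w‖ < r := by
      rw [le_div_iff₀ (by positivity)] at ht1
      calc ‖w‖ ≤ t * (‖v‖ + 1) := hwn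
        _ < r := by nlinarith
    have hwδ : ‖w‖ < δ := by
      rw [le_div_iff₀ (by positivity)] at ht2
      calc ‖w‖ ≤ t * (‖v‖ + 1) := hwn
        _ < δ := by nlinarith
    have hLw : fderiv ℝ ρ p w = -(D * t ^ 2 * c) := by
      rw [hw, map_sub, map_smul, map_smul, hdv, hν2]
      simp
    have hq := quad w hwr
    have hDc : D * c = (K : ℝ) * (‖v‖ + 1) ^ 2 + 1 := by
      rw [hD, div_mul_cancel₀ _ hc.ne']
    have hρw : ρ (p + w) < 0 := by
      have h2 : ρ (p + w) - fderiv ℝ ρ p w ≤ (K : ℝ) * ‖w‖ ^ 2 := (abs_le.1 hq).2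
      rw [hLw] at h2
      have h3 : (K : ℝ) * ‖w‖ ^ 2 ≤ (K : ℝ) * (t * (‖v‖ + 1)) ^ 2 :=
        mul_le_mul_of_nonneg_left (pow_le_pow_left₀ (norm_nonneg w) hwn 2) K.coe_nonneg
      have h5 : D * t ^ 2 * c = t ^ 2 * ((K : ℝ) * (‖v‖ + 1) ^ 2 + 1) := by
        rw [← hDc]; ring
      have h4 : (K : ℝ) * (t * (‖v‖ + 1)) ^ 2 - D * t ^ 2 * c = -t ^ 2 := by
        rw [h5]; ring
      have h6 : ρ (p + w) ≤ -t ^ 2 := by linarith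
      have h7 : 0 < t ^ 2 := by positivity
      linarith
    have hmem : p + w ∈ Ω := by rw [hρΩ]; exact hρw
    have hρf : ρ (f (p + w)) < 0 := by
      have := hfself hmem
      rw [hρΩ] at this
      exact this
    have hin : p + w ∈ ball p δ ∩ closure Ω := by
      constructor
      · rw [mem_ball, dist_eq_norm, show p + w - p = w by abel]; exact hwδ
      · exact subset_closure hmem
    have hest := hδ hin
    simp only [mem_setOf_eq, Function.comp_apply, hfp, hρp,
      show p + w - p = w by abel, sub_zero] at hest
    rw [Real.norm_eq_abs] at hest
    have habs := abs_le.1 hest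
    have hLwval : L w = t * L v - (D * t ^ 2) * L ν := by
      rw [hw, map_sub, map_smul, map_smul]; simp
    have hεw : ε * ‖w‖ ≤ ε * (t * (‖v‖ + 1)) :=
      mul_le_mul_of_nonneg_left hwn (le_of_lt hε0)
    -- L w ≤ ρ (f (p+w)) + ε ‖w‖ < ε t (‖v‖+1)
    have h5 : t * L v ≤ (D * t ^ 2) * L ν + ε * (t * (‖v‖ + 1)) := by
      have := habs.1
      linarith [hρf, hεw, hLwval, habs.1]
    have h6 : (D * t ^ 2) * L ν ≤ t * ε := by
      have h7 : L ν ≤ B := by rw [hB]; linarith [le_abs_self (L ν)]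
      have h8 : D * t * L ν ≤ D * t * B :=
        mul_le_mul_of_nonneg_left h7 (by positivity)
      have h8' : D * t * L ν ≤ ε := le_trans h8 hDtB
      have h9 : (D * t ^ 2) * L ν = t * (D * t * L ν) := by ring
      rw [h9]
      calc t * (D * t * L ν) ≤ t * ε := mul_le_mul_of_nonneg_left h8' (le_of_lt ht0)
        _ = t * ε := rfl
    have h9 : ε * (‖v‖ + 2) = L v / 2 := by
      rw [hε]; field_simp
    have h11 : ε * (t * (‖v‖ + 1)) + t * ε = t * (ε * (‖v‖ + 2)) := by ring
    rw [h9] at h11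
    have h10 : t * L v ≤ t * (L v / 2) := by linarith
    have h12 : t * (L v / 2) = t * L v / 2 := by ring
    have h13 : 0 < t * L v := mul_pos ht0 hne
    linarith
  -- assemble part 1
  have part1 : ∀ v : EuclideanSpace ℂ (Fin n),
      (inner ℂ ν v : ℂ).re = 0 → (inner ℂ ν (A.restrictScalars ℝ v) : ℂ).re = 0 := by
    intro v hv
    have h1 := key v hv
    have h2 := key (-v) (by rw [inner_neg_right, Complex.neg_re, hv, neg_zero])
    rw [map_neg] at h2
    have h3 : L v = 0 := le_antisymm h1 (by linarith)
    have h4 : L v = c * (inner ℂ ν (A v) : ℂ).re := by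
      have h5 : L v = fderiv ℝ ρ p (A v) := rfl
      rw [h5, hcf, ← inner_conj_symm]
      simp only [Complex.conj_re]
    rw [h4] at h3
    have h6 : (inner ℂ ν (A v) : ℂ).re = 0 := by
      rcases mul_eq_zero.1 h3 with h | h
      · exact absurd h (ne_of_gt hc)
      · exact h
    simpa using h6
  refine ⟨part1, fun v hv => ?_⟩
  have h1 := part1 v (by rw [hv]; simp)
  have h2 := part1 (Complex.I • v) (by rw [inner_smul_right, hv]; simp)
  simp only [ContinuousLinearMap.coe_restrictScalars'] at h1 h2
  rw [map_smul, inner_smul_right] at h2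
  apply Complex.ext
  · simpa using h1
  · simpa [Complex.mul_re] using h2
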